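/- Let n be a finite type, H : ℝ → Matrix n n ℂ twice continuously differentiable with H(t) Hermitian for all t, and let U : ℝ → Matrix n n ℂ satisfy U(0) = 1 and HasDerivAt U (-i • (H(t) * U(t))) t for all t. Then there exists C ≥ 0 such that for all Δt ∈ (0, 1], ‖U(Δt) - exp(-i Δt • H(Δt/2))‖ ≤ C · Δt³ (operator norm); i.e. the single-step error of the midpoint exponential integrator is O(Δt³). -/

import Mathlib

open scoped Matrix.Norms.L2Operator

lemma mvt_pow {E : Type*} [NormedAddCommGroup E] [NormedSpace ℝ E]
    {f f' : ℝ → E} (hd : ∀ s, HasDerivAt f (f' s) s) (h0 : f 0 = 0)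
    {c : ℝ} {m : ℕ} {t : ℝ} (ht : 0 ≤ t)
    (hb : ∀ s ∈ Set.Icc (0:ℝ) t, ‖f' s‖ ≤ c * s ^ m) :
    ‖f t‖ ≤ c / (m+1) * t ^ (m+1) := by
  have hcont : ContinuousOn f (Set.Icc 0 t) :=
    (Differentiable.continuous (fun s => (hd s).differentiableAt)).continuousOn
  have hB : ∀ x : ℝ, HasDerivAt (fun s => c / (m+1) * s ^ (m+1)) (c * x ^ m) x := by
    intro x
    have := (hasDerivAt_pow (m+1) x).const_mul (c / (m+1))
    refine this.congr_deriv ?_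
    have : ((m:ℝ)+1) ≠ 0 := by positivity
    push_cast
    field_simp
  have key := image_norm_le_of_norm_deriv_right_le_deriv_boundary hcont
    (fun x _ => (hd x).hasDerivWithinAt)
    (B := fun s => c / (m+1) * s ^ (m+1)) (B' := fun s => c * s ^ m)
    (by simp [h0]) hB
    (fun x hx => hb x (Set.mem_Icc.mpr ⟨hx.1, le_of_lt hx.2⟩))
  exact key (Set.mem_Icc.mpr ⟨ht, le_refl t⟩)

lemma exp_tail {A : Type*} [NormedRing A] [NormedAlgebra ℂ A] [CompleteSpace A] (M : A) :
    ‖NormedSpace.exp M - (1 + M + (2⁻¹ : ℂ) • (M * M))‖ ≤ ‖M‖ ^ 3 * Real.exp ‖M‖ := by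
  have hs : Summable (fun k : ℕ => ((k.factorial : ℂ))⁻¹ • M ^ k) :=
    NormedSpace.expSeries_summable' M
  have heq : NormedSpace.exp M - (1 + M + (2⁻¹ : ℂ) • (M * M))
      = ∑' i : ℕ, (((i + 3).factorial : ℂ))⁻¹ • M ^ (i + 3) := by
    have h := Summable.sum_add_tsum_nat_add 3 hs
    rw [NormedSpace.exp_eq_tsum (𝕂 := ℂ)]; beta_reduce; rw [← h]
    simp [Finset.sum_range_succ, Nat.factorial, pow_succ]
  rw [heq]
  have hbnd : ∀ i : ℕ, ‖(((i + 3).factorial : ℂ))⁻¹ • M ^ (i + 3)‖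
      ≤ ‖M‖ ^ 3 * (‖M‖ ^ i / i.factorial) := by
    intro i
    rw [norm_smul, norm_inv]
    have h1 : ‖((i + 3).factorial : ℂ)‖ = ((i + 3).factorial : ℝ) := by
      simp
    rw [h1]
    have h2 : ‖M ^ (i + 3)‖ ≤ ‖M‖ ^ (i + 3) := norm_pow_le' M (by omega)
    have h3 : ((i.factorial : ℝ))⁻¹ ≥ (((i + 3).factorial : ℝ))⁻¹ := by
      apply inv_anti₀
      · positivity
      · exact_mod_cast Nat.factorial_le (by omega)
    calc (((i + 3).factorial : ℝ))⁻¹ * ‖M ^ (i + 3)‖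
        ≤ ((i.factorial : ℝ))⁻¹ * ‖M‖ ^ (i + 3) := by
          apply mul_le_mul h3 h2 (norm_nonneg _) (by positivity)
      _ = ‖M‖ ^ 3 * (‖M‖ ^ i / i.factorial) := by rw [pow_add]; ring
  have hsum2 : Summable (fun i : ℕ => ‖M‖ ^ 3 * (‖M‖ ^ i / i.factorial)) :=
    (Real.summable_pow_div_factorial ‖M‖).mul_left _
  have hsumn : Summable (fun i : ℕ => ‖(((i + 3).factorial : ℂ))⁻¹ • M ^ (i + 3)‖) :=
    Summable.of_nonneg_of_le (fun i => norm_nonneg _) hbnd hsum2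
  calc ‖∑' i : ℕ, (((i + 3).factorial : ℂ))⁻¹ • M ^ (i + 3)‖
      ≤ ∑' i : ℕ, ‖(((i + 3).factorial : ℂ))⁻¹ • M ^ (i + 3)‖ := norm_tsum_le_tsum_norm hsumn
    _ ≤ ∑' i : ℕ, ‖M‖ ^ 3 * (‖M‖ ^ i / i.factorial) := Summable.tsum_le_tsum hbnd hsumn hsum2
    _ = ‖M‖ ^ 3 * ∑' i : ℕ, (‖M‖ ^ i / i.factorial) := tsum_mul_left
    _ = ‖M‖ ^ 3 * Real.exp ‖M‖ := by
        rw [Real.exp_eq_exp_ℝ, NormedSpace.exp_eq_tsum_div]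

theorem stmt_15 {n : Type*} [Fintype n] [DecidableEq n]
    (H : ℝ → Matrix n n ℂ) (hH : ContDiff ℝ 2 H)
    (hHerm : ∀ t : ℝ, (H t).IsHermitian)
    (U : ℝ → Matrix n n ℂ) (hU0 : U 0 = 1)
    (hU : ∀ t : ℝ, HasDerivAt U ((-Complex.I) • (H t * U t)) t) :
    ∃ C : ℝ, 0 ≤ C ∧ ∀ Δt ∈ Set.Ioc (0 : ℝ) 1,
      ‖U Δt - NormedSpace.exp ((-Complex.I * (Δt : ℂ)) • H (Δt / 2))‖ ≤ C * Δt ^ 3 := by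
  -- smoothness facts for H
  have hd1 : Differentiable ℝ H := hH.differentiable (by norm_num)
  have hH' : ∀ t, HasDerivAt H (deriv H t) t := fun t => (hd1 t).hasDerivAt
  have h2 : ContDiff ℝ ((1 : WithTop ℕ∞) + 1) H := by rw [one_add_one_eq_two]; exact hH
  have hcd : ContDiff ℝ 1 (deriv H) := (contDiff_succ_iff_deriv.mp h2).2.2
  have hd2 : Differentiable ℝ (deriv H) := hcd.differentiable one_ne_zero
  have hH'' : ∀ t, HasDerivAt (deriv H) (deriv (deriv H) t) t := fun t => (hd2 t).hasDerivAt
  have hc2 : Continuous (deriv (deriv H)) := by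
    have h1 : ContDiff ℝ ((0 : WithTop ℕ∞) + 1) (deriv H) := by rw [zero_add]; exact hcd
    exact (contDiff_succ_iff_deriv.mp h1).2.2.continuous
  have hUc : Continuous U := Differentiable.continuous (fun t => (hU t).differentiableAt)
  -- higher derivatives of U
  set U1 : ℝ → Matrix n n ℂ := fun t => (-Complex.I) • (H t * U t) with hU1def
  set U2 : ℝ → Matrix n n ℂ := fun t => (-Complex.I) • (deriv H t * U t + H t * U1 t) with hU2def
  set U3 : ℝ → Matrix n n ℂ := fun t =>
    (-Complex.I) • ((deriv (deriv H) t * U t + deriv H t * U1 t)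
      + (deriv H t * U1 t + H t * U2 t)) with hU3def
  have hU1 : ∀ t, HasDerivAt U1 (U2 t) t := fun t =>
    ((hH' t).mul (hU t)).const_smul (-Complex.I)
  have hU1c : Continuous U1 := (continuous_const (y := -Complex.I)).smul ((hH.continuous.mul hUc))
  have hU2 : ∀ t, HasDerivAt U2 (U3 t) t := fun t =>
    ((((hH'' t).mul (hU t)).add ((hH' t).mul (hU1 t)))).const_smul (-Complex.I)
  have hU2c : Continuous U2 := (continuous_const (y := -Complex.I)).smul
    (((hcd.continuous.mul hUc)).add (hH.continuous.mul hU1c))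
  have hU3c : Continuous U3 := (continuous_const (y := -Complex.I)).smul
    (((hc2.mul hUc).add (hcd.continuous.mul hU1c)).add
      ((hcd.continuous.mul hU1c).add (hH.continuous.mul hU2c)))
  -- bounds on [0,1]
  obtain ⟨MH, hMH⟩ := (isCompact_Icc (a := (0:ℝ)) (b := 1)).exists_bound_of_continuousOn
    hH.continuous.continuousOn
  obtain ⟨M1, hM1⟩ := (isCompact_Icc (a := (0:ℝ)) (b := 1)).exists_bound_of_continuousOn
    hcd.continuous.continuousOn
  obtain ⟨M2, hM2⟩ := (isCompact_Icc (a := (0:ℝ)) (b := 1)).exists_bound_of_continuousOn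
    hc2.continuousOn
  obtain ⟨M3, hM3⟩ := (isCompact_Icc (a := (0:ℝ)) (b := 1)).exists_bound_of_continuousOn
    hU3c.continuousOn
  have h01 : (0:ℝ) ∈ Set.Icc (0:ℝ) 1 := by norm_num
  have hMH0 : 0 ≤ MH := le_trans (norm_nonneg _) (hMH 0 h01)
  have hM10 : 0 ≤ M1 := le_trans (norm_nonneg _) (hM1 0 h01)
  have hM20 : 0 ≤ M2 := le_trans (norm_nonneg _) (hM2 0 h01)
  have hM30 : 0 ≤ M3 := le_trans (norm_nonneg _) (hM3 0 h01)
  -- Taylor estimates for U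
  have hg2 : ∀ s ∈ Set.Icc (0:ℝ) 1, ‖U2 s - U2 0‖ ≤ M3 * s := by
    intro s hs
    have h := mvt_pow (f := fun x => U2 x - U2 0) (f' := U3) (m := 0)
      (fun x => (hU2 x).sub_const _) (by simp) hs.1
      (fun x hx => by simpa using hM3 x ⟨hx.1, hx.2.trans hs.2⟩)
    simpa using h
  have hg1 : ∀ s ∈ Set.Icc (0:ℝ) 1, ‖U1 s - U1 0 - s • U2 0‖ ≤ M3 / 2 * s ^ 2 := by
    intro s hs
    have h := mvt_pow (f := fun x => U1 x - U1 0 - x • U2 0)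
      (f' := fun x => U2 x - U2 0) (m := 1)
      (fun x => by
        have := ((hU1 x).sub_const (U1 0)).sub ((hasDerivAt_id x).smul_const (U2 0))
        exact this.congr_deriv (by simp))
      (by simp) hs.1
      (fun x hx => by simpa using hg2 x ⟨hx.1, hx.2.trans hs.2⟩)
    norm_num at h
    exact h
  have hg0 : ∀ s ∈ Set.Icc (0:ℝ) 1,
      ‖U s - (U 0 + s • U1 0 + (s ^ 2 / 2) • U2 0)‖ ≤ M3 / 6 * s ^ 3 := by
    intro s hs
    have h := mvt_pow (f := fun x => U x - (U 0 + x • U1 0 + (x ^ 2 / 2) • U2 0))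
      (f' := fun x => U1 x - (U1 0 + x • U2 0)) (m := 2)
      (fun x => by
        have hpoly : HasDerivAt (fun x : ℝ => U 0 + x • U1 0 + (x ^ 2 / 2) • U2 0)
            (U1 0 + x • U2 0) x := by
          have h1 := (hasDerivAt_id x).smul_const (U1 0)
          have h2 := ((hasDerivAt_pow 2 x).div_const 2).smul_const (U2 0)
          have := ((hasDerivAt_const x (U 0)).add h1).add h2
          refine this.congr_deriv ?_
          module
        exact (hU x).sub hpoly)
      (by simp) hs.1
      (fun x hx => by
        have hb := hg1 x ⟨hx.1, hx.2.trans hs.2⟩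
        rw [sub_sub] at hb
        simpa using hb)
    calc ‖U s - (U 0 + s • U1 0 + (s ^ 2 / 2) • U2 0)‖
        ≤ M3 / 2 / ((2:ℕ) + 1) * s ^ (2 + 1) := h
      _ = M3 / 6 * s ^ 3 := by push_cast; ring
  -- Taylor estimates for H
  have hh1 : ∀ s ∈ Set.Icc (0:ℝ) 1, ‖deriv H s - deriv H 0‖ ≤ M2 * s := by
    intro s hs
    have h := mvt_pow (f := fun x => deriv H x - deriv H 0) (f' := deriv (deriv H)) (m := 0)
      (fun x => (hH'' x).sub_const _) (by simp) hs.1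
      (fun x hx => by simpa using hM2 x ⟨hx.1, hx.2.trans hs.2⟩)
    simpa using h
  have hh0 : ∀ s ∈ Set.Icc (0:ℝ) 1,
      ‖H s - H 0 - s • deriv H 0‖ ≤ M2 / 2 * s ^ 2 := by
    intro s hs
    have h := mvt_pow (f := fun x => H x - H 0 - x • deriv H 0)
      (f' := fun x => deriv H x - deriv H 0) (m := 1)
      (fun x => by
        have := ((hH' x).sub_const (H 0)).sub ((hasDerivAt_id x).smul_const (deriv H 0))
        exact this.congr_deriv (by simp))
      (by simp) hs.1
      (fun x hx => by simpa using hh1 x ⟨hx.1, hx.2.trans hs.2⟩)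
    norm_num at h
    exact h
  have hlip : ∀ s ∈ Set.Icc (0:ℝ) 1, ‖H s - H 0‖ ≤ M1 * s := by
    intro s hs
    have h := mvt_pow (f := fun x => H x - H 0) (f' := deriv H) (m := 0)
      (fun x => (hH' x).sub_const _) (by simp) hs.1
      (fun x hx => by simpa using hM1 x ⟨hx.1, hx.2.trans hs.2⟩)
    simpa using h
  -- the constant
  refine ⟨M3 / 6 + M2 / 8 + MH * M1 / 2 + MH ^ 3 * Real.exp MH, by positivity, ?_⟩
  intro Δt hΔt
  obtain ⟨hΔ0, hΔ1⟩ := hΔt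
  have hΔ0' : (0:ℝ) ≤ Δt := le_of_lt hΔ0
  have hmem : Δt ∈ Set.Icc (0:ℝ) 1 := ⟨hΔ0', hΔ1⟩
  have hmem2 : Δt / 2 ∈ Set.Icc (0:ℝ) 1 := ⟨by linarith, by linarith⟩
  set K := H (Δt / 2) with hK
  set A := (-Complex.I * (Δt : ℂ)) • K with hA
  set P := U 0 + Δt • U1 0 + (Δt ^ 2 / 2) • U2 0 with hP
  set E1 := (-Complex.I * (Δt : ℂ)) • (K - H 0 - (Δt / 2) • deriv H 0) with hE1
  set E2 := (-(Δt:ℂ) ^ 2 / 2) • (K * K - H 0 * H 0) with hE2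
  set T := NormedSpace.exp A - (1 + A + (2⁻¹ : ℂ) • (A * A)) with hT
  -- the key algebraic identity
  have hid : U Δt - NormedSpace.exp A = (U Δt - P) - E1 - E2 - T := by
    have hsum : P + E1 + E2 = 1 + A + (2⁻¹ : ℂ) • (A * A) := by
      rw [hP, hE1, hE2, hA, hU2def, hU1def]
      simp only [hU0, mul_one, smul_mul_assoc, mul_smul_comm, smul_smul, smul_add, smul_sub]
      match_scalars
      all_goals try simp only [Complex.coe_algebraMap]
      all_goals try ring_nf
      all_goals try simp only [Complex.I_sq]
      all_goals try ring_nf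
    rw [hT]
    rw [← hsum]
    abel
  rw [hid]
  -- norms of scalars
  have hnormsc : ‖(-Complex.I * (Δt : ℂ))‖ = Δt := by
    simp [norm_mul, Complex.norm_real, abs_of_nonneg hΔ0']
  have hKb : ‖K‖ ≤ MH := hMH _ hmem2
  have hAb : ‖A‖ ≤ MH * Δt := by
    rw [hA, norm_smul, hnormsc, mul_comm]
    exact mul_le_mul_of_nonneg_right hKb hΔ0'
  have hAb1 : ‖A‖ ≤ MH := le_trans hAb (by nlinarith)
  -- bound each piece
  have b0 : ‖U Δt - P‖ ≤ M3 / 6 * Δt ^ 3 := hg0 Δt hmem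
  have b1 : ‖E1‖ ≤ M2 / 8 * Δt ^ 3 := by
    rw [hE1, norm_smul, hnormsc]
    have := hh0 (Δt / 2) hmem2
    calc Δt * ‖K - H 0 - (Δt / 2) • deriv H 0‖ ≤ Δt * (M2 / 2 * (Δt / 2) ^ 2) := by
          exact mul_le_mul_of_nonneg_left this hΔ0'
      _ = M2 / 8 * Δt ^ 3 := by ring
  have b2 : ‖E2‖ ≤ MH * M1 / 2 * Δt ^ 3 := by
    rw [hE2, norm_smul]
    have hsc : ‖(-(Δt:ℂ) ^ 2 / 2)‖ = Δt ^ 2 / 2 := by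
      simp [norm_div, norm_pow, Complex.norm_real, abs_of_nonneg hΔ0']
    rw [hsc]
    have hKH : ‖K - H 0‖ ≤ M1 * (Δt / 2) := hlip (Δt / 2) hmem2
    have hH0b : ‖H 0‖ ≤ MH := hMH 0 h01
    have hfac : K * K - H 0 * H 0 = K * (K - H 0) + (K - H 0) * H 0 := by
      noncomm_ring
    have : ‖K * K - H 0 * H 0‖ ≤ MH * (M1 * (Δt / 2)) + M1 * (Δt / 2) * MH := by
      rw [hfac]
      refine le_trans (norm_add_le _ _) (add_le_add ?_ ?_)
      · exact le_trans (norm_mul_le _ _) (mul_le_mul hKb hKH (norm_nonneg _) hMH0)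
      · exact le_trans (norm_mul_le _ _) (mul_le_mul hKH hH0b (norm_nonneg _) (by positivity))
    calc Δt ^ 2 / 2 * ‖K * K - H 0 * H 0‖
        ≤ Δt ^ 2 / 2 * (MH * (M1 * (Δt / 2)) + M1 * (Δt / 2) * MH) := by
          exact mul_le_mul_of_nonneg_left this (by positivity)
      _ = MH * M1 / 2 * Δt ^ 3 := by ring
  have b3 : ‖T‖ ≤ MH ^ 3 * Real.exp MH * Δt ^ 3 := by
    rw [hT]
    refine le_trans (exp_tail A) ?_
    have h1 : ‖A‖ ^ 3 ≤ (MH * Δt) ^ 3 := by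
      exact pow_le_pow_left₀ (norm_nonneg _) hAb 3
    have h2 : Real.exp ‖A‖ ≤ Real.exp MH := Real.exp_le_exp.mpr hAb1
    calc ‖A‖ ^ 3 * Real.exp ‖A‖ ≤ (MH * Δt) ^ 3 * Real.exp MH := by
          exact mul_le_mul h1 h2 (le_of_lt (Real.exp_pos _)) (by positivity)
      _ = MH ^ 3 * Real.exp MH * Δt ^ 3 := by ring
  calc ‖U Δt - P - E1 - E2 - T‖ ≤ ‖U Δt - P‖ + ‖E1‖ + ‖E2‖ + ‖T‖ := by
        refine le_trans (norm_sub_le _ _) ?_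
        refine add_le_add ?_ le_rfl
        refine le_trans (norm_sub_le _ _) ?_
        refine add_le_add ?_ le_rfl
        exact norm_sub_le _ _
    _ ≤ M3 / 6 * Δt ^ 3 + M2 / 8 * Δt ^ 3 + MH * M1 / 2 * Δt ^ 3
          + MH ^ 3 * Real.exp MH * Δt ^ 3 := by
        exact add_le_add (add_le_add (add_le_add b0 b1) b2) b3
    _ = (M3 / 6 + M2 / 8 + MH * M1 / 2 + MH ^ 3 * Real.exp MH) * Δt ^ 3 := by ring
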